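/- arXiv:1912.00628 — 4 statements merged into one kernel-verified Lean document; each statement's English description precedes it below -/
import Mathlib

section
/- Let φ : [0,2R] → ℝ be C² with φ'' ≤ 0 on (0,R), φ constant equal to h on [0,R₁] for some 0 < R₁ < R (so φ' ≤ 0 on [0,R)). Then ∫₀^R r·|W(r)| dr ≤ −R·φ'(R)/√(1+(φ'(R))²), where |W(r)| = √((φ''/(1+(φ')²)^{3/2})² + (φ'/(r√(1+(φ')²)))²). -/
open MeasureTheory intervalIntegral

private lemma rpow_three_halves' {x : ℝ} (hx : 0 < x) :
    x ^ ((3:ℝ)/2) = x * Real.sqrt x := by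
  rw [show (3:ℝ)/2 = 1 + 1/2 by norm_num, Real.rpow_add hx, Real.rpow_one,
    ← Real.sqrt_eq_rpow]

private lemma contWithinAt_zero_of_eq_zero {f : ℝ → ℝ} {R R₁ : ℝ} (hR₁ : 0 < R₁)
    (hf : ∀ x ∈ Set.Ico 0 R₁, f x = 0) :
    ContinuousWithinAt f (Set.Icc 0 R) 0 := by
  have hev : ∀ᶠ x in nhdsWithin 0 (Set.Icc 0 R), f x = 0 := by
    filter_upwards [mem_nhdsWithin_of_mem_nhds (Iio_mem_nhds hR₁), self_mem_nhdsWithin]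
      with x hx1 hx2
    exact hf x ⟨hx2.1, hx1⟩
  have h0 : f 0 = 0 := hf 0 ⟨le_refl 0, hR₁⟩
  unfold ContinuousWithinAt
  rw [h0]
  exact tendsto_const_nhds.congr' (hev.mono fun x hx => hx.symm)

/-- upper bound for `∫₀^R r·|W(r)| dr` for a radially symmetric concave cap. -/
theorem weingarten_integral_upper_bound
    (R R₁ h : ℝ) (hR : 0 < R) (hR₁ : 0 < R₁) (hR₁R : R₁ < R)
    (φ : ℝ → ℝ) (hφ : ContDiffOn ℝ 2 φ (Set.Icc 0 (2*R)))
    (hconc : ∀ r ∈ Set.Ioo 0 R, deriv (deriv φ) r ≤ 0)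
    (hconst : ∀ r ∈ Set.Icc 0 R₁, φ r = h)
    (hφ'0 : deriv φ 0 = 0)
    (hφ'neg : ∀ r ∈ Set.Ico 0 R, deriv φ r ≤ 0) :
    (∫ r in (0:ℝ)..R,
        r * Real.sqrt ((deriv (deriv φ) r / (1 + (deriv φ r)^2) ^ ((3:ℝ)/2))^2
          + (deriv φ r / (r * Real.sqrt (1 + (deriv φ r)^2)))^2))
      ≤ -R * deriv φ R / Real.sqrt (1 + (deriv φ R)^2) := by
  have h2R : R < 2*R := by linarith
  set s : Set ℝ := Set.Ioo (0:ℝ) (2*R) with hs_def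
  have hsopen : IsOpen s := isOpen_Ioo
  have hφs : ContDiffOn ℝ 2 φ s := hφ.mono Set.Ioo_subset_Icc_self
  have hφ1 : ContDiffOn ℝ 1 (deriv φ) s := by
    have := hφs.deriv_of_isOpen hsopen (m := 1) (by norm_num)
    exact this
  have hu_cont : ContinuousOn (deriv φ) s := hφ1.continuousOn
  have hv_cont : ContinuousOn (deriv (deriv φ)) s := by
    have := hφ1.deriv_of_isOpen hsopen (m := 0) (by norm_num)
    exact this.continuousOn
  have hHasDeriv : ∀ r ∈ s, HasDerivAt (deriv φ) (deriv (deriv φ) r) r := fun r hr =>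
    ((hφ1.differentiableOn one_ne_zero).differentiableAt (hsopen.mem_nhds hr)).hasDerivAt
  -- deriv φ vanishes near 0
  have hd0 : ∀ r ∈ Set.Ioo 0 R₁, deriv φ r = 0 := by
    intro r hr
    have hev : φ =ᶠ[nhds r] fun _ => h := by
      filter_upwards [isOpen_Ioo.mem_nhds hr] with x hx
      exact hconst x ⟨le_of_lt hx.1, le_of_lt hx.2⟩
    rw [hev.deriv_eq]; exact deriv_const r h
  have hd0' : ∀ r ∈ Set.Ico 0 R₁, deriv φ r = 0 := by
    intro r hr
    rcases eq_or_lt_of_le hr.1 with h0 | h0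
    · rw [← h0]; exact hφ'0
    · exact hd0 r ⟨h0, hr.2⟩
  have hdd0 : ∀ r ∈ Set.Ioo 0 R₁, deriv (deriv φ) r = 0 := by
    intro r hr
    have hev : deriv φ =ᶠ[nhds r] fun _ => 0 := by
      filter_upwards [isOpen_Ioo.mem_nhds hr] with x hx
      exact hd0 x hx
    rw [hev.deriv_eq]; exact deriv_const r 0
  -- basic positivity
  have hpos : ∀ x : ℝ, (0:ℝ) < 1 + (deriv φ x)^2 := fun x => by positivity
  have hSpos : ∀ x : ℝ, (0:ℝ) < Real.sqrt (1 + (deriv φ x)^2) := fun x =>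
    Real.sqrt_pos.2 (hpos x)
  have hPpos : ∀ x : ℝ, (0:ℝ) < (1 + (deriv φ x)^2) ^ ((3:ℝ)/2) := fun x =>
    Real.rpow_pos_of_pos (hpos x) _
  -- the functions
  set W : ℝ → ℝ := fun r =>
      r * Real.sqrt ((deriv (deriv φ) r / (1 + (deriv φ r)^2) ^ ((3:ℝ)/2))^2
        + (deriv φ r / (r * Real.sqrt (1 + (deriv φ r)^2)))^2) with hW_def
  set G : ℝ → ℝ := fun r =>
      deriv φ r / Real.sqrt (1 + (deriv φ r)^2) + r *
        (deriv (deriv φ) r / (1 + (deriv φ r)^2) ^ ((3:ℝ)/2)) with hG_def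
  set F : ℝ → ℝ := fun r => r * (deriv φ r / Real.sqrt (1 + (deriv φ r)^2)) with hF_def
  -- continuity of deriv φ on [0, R]
  have hu_Icc : ContinuousOn (deriv φ) (Set.Icc 0 R) := by
    intro r hr
    rcases eq_or_lt_of_le hr.1 with h0 | h0
    · rw [← h0]; exact contWithinAt_zero_of_eq_zero hR₁ hd0'
    · exact ((hu_cont r ⟨h0, lt_of_le_of_lt hr.2 h2R⟩).continuousAt
        (hsopen.mem_nhds ⟨h0, lt_of_le_of_lt hr.2 h2R⟩)).continuousWithinAt
  -- continuity of F on [0, R]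
  have hF_cont : ContinuousOn F (Set.Icc 0 R) :=
    continuousOn_id.mul (hu_Icc.div
      ((continuousOn_const.add (hu_Icc.pow 2)).sqrt)
      (fun x _ => ne_of_gt (hSpos x)))
  -- continuity of G and W on [0, R]
  have hG_cont : ContinuousOn G (Set.Icc 0 R) := by
    intro r hr
    rcases eq_or_lt_of_le hr.1 with h0 | h0
    · rw [← h0]
      apply contWithinAt_zero_of_eq_zero hR₁
      intro x hx
      rcases eq_or_lt_of_le hx.1 with hx0 | hx0
      · simp [hG_def, ← hx0, hφ'0]
      · simp [hG_def, hd0 x ⟨hx0, hx.2⟩, hdd0 x ⟨hx0, hx.2⟩]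
    · have hrs : r ∈ s := ⟨h0, lt_of_le_of_lt hr.2 h2R⟩
      have h1 : ContinuousAt (deriv φ) r := (hu_cont r hrs).continuousAt (hsopen.mem_nhds hrs)
      have h2 : ContinuousAt (deriv (deriv φ)) r :=
        (hv_cont r hrs).continuousAt (hsopen.mem_nhds hrs)
      have h3 : ContinuousAt (fun x => 1 + (deriv φ x)^2) r := by fun_prop
      have h4 : ContinuousAt (fun x => (1 + (deriv φ x)^2) ^ ((3:ℝ)/2)) r :=
        h3.rpow_const (Or.inr (by norm_num))
      exact ContinuousAt.continuousWithinAt <| by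
        apply ContinuousAt.add
        · exact h1.div (h3.sqrt) (ne_of_gt (hSpos r))
        · exact continuousAt_id.mul (h2.div h4 (ne_of_gt (hPpos r)))
  have hW_cont : ContinuousOn W (Set.Icc 0 R) := by
    intro r hr
    rcases eq_or_lt_of_le hr.1 with h0 | h0
    · rw [← h0]
      apply contWithinAt_zero_of_eq_zero hR₁
      intro x hx
      rcases eq_or_lt_of_le hx.1 with hx0 | hx0
      · simp [hW_def, ← hx0]
      · simp [hW_def, hd0 x ⟨hx0, hx.2⟩, hdd0 x ⟨hx0, hx.2⟩]
    · have hrs : r ∈ s := ⟨h0, lt_of_le_of_lt hr.2 h2R⟩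
      have h1 : ContinuousAt (deriv φ) r := (hu_cont r hrs).continuousAt (hsopen.mem_nhds hrs)
      have h2 : ContinuousAt (deriv (deriv φ)) r :=
        (hv_cont r hrs).continuousAt (hsopen.mem_nhds hrs)
      have h3 : ContinuousAt (fun x => 1 + (deriv φ x)^2) r := by fun_prop
      have h4 : ContinuousAt (fun x => (1 + (deriv φ x)^2) ^ ((3:ℝ)/2)) r :=
        h3.rpow_const (Or.inr (by norm_num))
      have h5 : ContinuousAt (fun x => x * Real.sqrt (1 + (deriv φ x)^2)) r :=
        continuousAt_id.mul h3.sqrt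
      have h6 : r * Real.sqrt (1 + (deriv φ r)^2) ≠ 0 :=
        ne_of_gt (mul_pos h0 (hSpos r))
      exact ContinuousAt.continuousWithinAt <| by
        apply ContinuousAt.mul continuousAt_id
        apply ContinuousAt.sqrt
        apply ContinuousAt.add
        · exact (h2.div h4 (ne_of_gt (hPpos r))).pow 2
        · exact (h1.div h5 h6).pow 2
  -- derivative of F on (0, R)
  have hF_deriv : ∀ r ∈ Set.Ioo (0:ℝ) R, HasDerivAt F (G r) r := by
    intro r hr
    have hrs : r ∈ s := ⟨hr.1, hr.2.trans h2R⟩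
    set u := deriv φ r with hu_def
    set v := deriv (deriv φ) r with hv_def
    have h1 : HasDerivAt (deriv φ) v r := hHasDeriv r hrs
    have hsq : HasDerivAt (fun t => 1 + (deriv φ t)^2) (0 + 2 * u^1 * v) r :=
      (hasDerivAt_const r (1:ℝ)).add (by simpa using h1.fun_pow 2)
    have hsqrt : HasDerivAt (fun t => Real.sqrt (1 + (deriv φ t)^2))
        (1 / (2 * Real.sqrt (1 + u^2)) * (0 + 2 * u^1 * v)) r :=
      (Real.hasDerivAt_sqrt (ne_of_gt (hpos r))).comp r hsq
    have hdiv : HasDerivAt (fun t => deriv φ t / Real.sqrt (1 + (deriv φ t)^2))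
        ((v * Real.sqrt (1 + u^2) - u * (1 / (2 * Real.sqrt (1 + u^2)) * (0 + 2 * u^1 * v)))
          / (Real.sqrt (1 + u^2))^2) r :=
      h1.div hsqrt (ne_of_gt (hSpos r))
    have hF' : HasDerivAt F
        (1 * (u / Real.sqrt (1 + u^2)) +
          r * ((v * Real.sqrt (1 + u^2) - u * (1 / (2 * Real.sqrt (1 + u^2)) * (0 + 2 * u^1 * v)))
            / (Real.sqrt (1 + u^2))^2)) r := (hasDerivAt_id r).mul hdiv
    convert hF' using 1
    have hS2 : (Real.sqrt (1 + u^2))^2 = 1 + u^2 := Real.sq_sqrt (le_of_lt (hpos r))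
    have hP : (1 + u^2) ^ ((3:ℝ)/2) = (1 + u^2) * Real.sqrt (1 + u^2) :=
      rpow_three_halves' (hpos r)
    have hSne : Real.sqrt (1 + u^2) ≠ 0 := ne_of_gt (hSpos r)
    simp only [hG_def, hP, ← hu_def, ← hv_def]
    field_simp
    linear_combination (-2*r*v*u^2) * hS2
  -- pointwise bound W ≤ -G on (0,R)
  have hbound : ∀ r ∈ Set.Ioo (0:ℝ) R, W r ≤ -G r := by
    intro r hr
    set u := deriv φ r with hu_def
    set v := deriv (deriv φ) r with hv_def
    have hu : u ≤ 0 := hφ'neg r ⟨le_of_lt hr.1, hr.2⟩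
    have hv : v ≤ 0 := hconc r hr
    set S := Real.sqrt (1 + u^2) with hS_def
    set P := (1 + u^2) ^ ((3:ℝ)/2) with hP_def
    have hS : 0 < S := hSpos r
    have hP' : 0 < P := hPpos r
    have ha : v / P ≤ 0 := div_nonpos_of_nonpos_of_nonneg hv (le_of_lt hP')
    have hb : u / (r * S) ≤ 0 := div_nonpos_of_nonpos_of_nonneg hu (le_of_lt (mul_pos hr.1 hS))
    have key : Real.sqrt ((v / P)^2 + (u / (r * S))^2) ≤ -(v / P) + -(u / (r * S)) := by
      have h1 : (v / P)^2 + (u / (r * S))^2 ≤ (-(v / P) + -(u / (r * S)))^2 := by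
        nlinarith [mul_nonneg (neg_nonneg.2 ha) (neg_nonneg.2 hb)]
      calc Real.sqrt ((v / P)^2 + (u / (r * S))^2)
          ≤ Real.sqrt ((-(v / P) + -(u / (r * S)))^2) := Real.sqrt_le_sqrt h1
        _ = -(v / P) + -(u / (r * S)) := Real.sqrt_sq (by linarith [neg_nonneg.2 ha, neg_nonneg.2 hb])
    have hWr : W r = r * Real.sqrt ((v / P)^2 + (u / (r * S))^2) := rfl
    have hGr : G r = u / S + r * (v / P) := rfl
    rw [hWr, hGr]
    have hr0 : r ≠ 0 := ne_of_gt hr.1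
    have hSne : S ≠ 0 := ne_of_gt hS
    have hPne : P ≠ 0 := ne_of_gt hP'
    have h2 : r * (-(v / P) + -(u / (r * S))) = -(u / S + r * (v / P)) := by
      field_simp
      ring
    calc r * Real.sqrt ((v / P)^2 + (u / (r * S))^2)
        ≤ r * (-(v / P) + -(u / (r * S))) :=
          mul_le_mul_of_nonneg_left key (le_of_lt hr.1)
      _ = -(u / S + r * (v / P)) := h2
  -- integrability
  have hWint : IntervalIntegrable W volume 0 R := by
    apply ContinuousOn.intervalIntegrable
    rwa [Set.uIcc_of_le (le_of_lt hR)]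
  have hGint : IntervalIntegrable G volume 0 R := by
    apply ContinuousOn.intervalIntegrable
    rwa [Set.uIcc_of_le (le_of_lt hR)]
  have hnGint : IntervalIntegrable (fun r => -G r) volume 0 R := hGint.neg
  -- a.e. bound on Icc
  have hae : W ≤ᵐ[volume.restrict (Set.Icc 0 R)] fun r => -G r := by
    have hnull : (volume : Measure ℝ) ({0, R} : Set ℝ) = 0 :=
      Set.Countable.measure_zero (((Set.finite_singleton R).insert 0).countable) _
    have h1 : ∀ᵐ x ∂(volume.restrict (Set.Icc 0 R)), x ∉ ({0, R} : Set ℝ) :=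
      ae_mono Measure.restrict_le_self (measure_eq_zero_iff_ae_notMem.1 hnull)
    filter_upwards [ae_restrict_mem measurableSet_Icc, h1] with x hx hx'
    have hx0 : x ≠ 0 := fun hc => hx' (by simp [hc])
    have hxR : x ≠ R := fun hc => hx' (by simp [hc])
    exact hbound x ⟨lt_of_le_of_ne hx.1 (Ne.symm hx0), lt_of_le_of_ne hx.2 hxR⟩
  have hmono : (∫ r in (0:ℝ)..R, W r) ≤ ∫ r in (0:ℝ)..R, -G r :=
    integral_mono_ae_restrict (le_of_lt hR) hWint hnGint hae
  -- FTC
  have hFTC : (∫ r in (0:ℝ)..R, G r) = F R - F 0 :=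
    integral_eq_sub_of_hasDerivAt_of_le (le_of_lt hR) hF_cont hF_deriv hGint
  have hF0 : F 0 = 0 := by simp [hF_def]
  have hfinal : (∫ r in (0:ℝ)..R, -G r) = -R * deriv φ R / Real.sqrt (1 + (deriv φ R)^2) := by
    rw [intervalIntegral.integral_neg, hFTC, hF0]
    simp [hF_def]
    ring
  calc (∫ r in (0:ℝ)..R, W r) ≤ ∫ r in (0:ℝ)..R, -G r := hmono
    _ = -R * deriv φ R / Real.sqrt (1 + (deriv φ R)^2) := hfinal
end

section
/- Let φ : [0,2R] → ℝ be C² with φ'' ≥ 0 on (R,2R), φ ≡ 0 on [R₂,2R] for some R < R₂ < 2R, and φ' ≤ 0 on (R,2R). Then −R·φ'(R)/√(1+(φ'(R))²) ≤ ∫_R^{2R} r·|W(r)| dr ≤ −R·φ'(R)/√(1+(φ'(R))²) − 2∫_R^{2R} φ'/√(1+(φ')²) dr, where |W(r)| = √((φ''/(1+(φ')²)^{3/2})² + (φ'/(r√(1+(φ')²)))²). -/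
open MeasureTheory intervalIntegral

lemma psi_hasDerivAt (t : ℝ) :
    HasDerivAt (fun s : ℝ => s / Real.sqrt (1 + s^2)) (1 / (1 + t^2) ^ ((3:ℝ)/2)) t := by
  have hu : (0:ℝ) < 1 + t^2 := by positivity
  have hs : (0:ℝ) < Real.sqrt (1 + t^2) := Real.sqrt_pos.mpr hu
  have hsq : HasDerivAt (fun s : ℝ => 1 + s^2) (2*t) t := by
    simpa using ((hasDerivAt_pow 2 t).const_add 1)
  have hsqrt : HasDerivAt (fun s : ℝ => Real.sqrt (1 + s^2))
      (t / Real.sqrt (1 + t^2)) t := by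
    have := hsq.sqrt (ne_of_gt hu)
    convert this using 1
    field_simp
  have := (hasDerivAt_id' t).div hsqrt (ne_of_gt hs)
  refine this.congr_deriv ?_
  symm
  rw [show ((3:ℝ)/2) = 1 + 1/2 by norm_num, Real.rpow_add hu, Real.rpow_one,
    ← Real.sqrt_eq_rpow]
  have h2 : Real.sqrt (1 + t^2) ^ 2 = 1 + t^2 := Real.sq_sqrt hu.le
  field_simp
  nlinarith [h2, hs]

lemma key_ineq (A B : ℝ) (hA : 0 ≤ A) (hB : B ≤ 0) :
    A + B ≤ Real.sqrt (A^2 + B^2) ∧ Real.sqrt (A^2 + B^2) ≤ A - B := by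
  constructor
  · rcases le_or_gt (A + B) 0 with h | h
    · exact h.trans (Real.sqrt_nonneg _)
    · calc A + B = Real.sqrt ((A+B)^2) := (Real.sqrt_sq h.le).symm
        _ ≤ Real.sqrt (A^2 + B^2) := Real.sqrt_le_sqrt (by nlinarith)
  · calc Real.sqrt (A^2 + B^2) ≤ Real.sqrt ((A - B)^2) :=
        Real.sqrt_le_sqrt (by nlinarith)
      _ = A - B := Real.sqrt_sq (by linarith)

/-- two-sided bound for `∫_R^{2R} r·|W(r)| dr` on the convex annular part. -/
theorem weingarten_integral_annulus_bounds
    (R R₂ : ℝ) (hR : 0 < R) (hR₂ : R < R₂) (hR₂' : R₂ < 2*R)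
    (φ : ℝ → ℝ) (hφ : ContDiffOn ℝ 2 φ (Set.Icc 0 (2*R)))
    (hconv : ∀ r ∈ Set.Ioo R (2*R), 0 ≤ deriv (deriv φ) r)
    (hzero : ∀ r ∈ Set.Icc R₂ (2*R), φ r = 0)
    (hφ'neg : ∀ r ∈ Set.Ioo R (2*R), deriv φ r ≤ 0) :
    -R * deriv φ R / Real.sqrt (1 + (deriv φ R)^2)
      ≤ (∫ r in R..(2*R),
          r * Real.sqrt ((deriv (deriv φ) r / (1 + (deriv φ r)^2) ^ ((3:ℝ)/2))^2
            + (deriv φ r / (r * Real.sqrt (1 + (deriv φ r)^2)))^2)) ∧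
    (∫ r in R..(2*R),
        r * Real.sqrt ((deriv (deriv φ) r / (1 + (deriv φ r)^2) ^ ((3:ℝ)/2))^2
          + (deriv φ r / (r * Real.sqrt (1 + (deriv φ r)^2)))^2))
      ≤ -R * deriv φ R / Real.sqrt (1 + (deriv φ R)^2)
        - 2 * ∫ r in R..(2*R), deriv φ r / Real.sqrt (1 + (deriv φ r)^2) := by
  set I : Set ℝ := Set.Ioo 0 (2*R) with hIdef
  set c : ℝ := (R₂ + 2*R)/2 with hcdef
  have hcR₂ : R₂ < c := by rw [hcdef]; linarith
  have hc2R : c < 2*R := by rw [hcdef]; linarith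
  have hRc : R < c := hR₂.trans hcR₂
  -- regularity
  have hφI : ContDiffOn ℝ 2 φ I := hφ.mono Set.Ioo_subset_Icc_self
  have h1 := (contDiffOn_succ_iff_deriv_of_isOpen (n := 1) isOpen_Ioo).mp
    (by exact_mod_cast hφI)
  have h2 := (contDiffOn_succ_iff_deriv_of_isOpen (n := 0) isOpen_Ioo).mp
    (by exact_mod_cast h1.2.2)
  have hdφ' : DifferentiableOn ℝ (deriv φ) I := h2.1
  have hcont1 : ContinuousOn (deriv φ) I := h1.2.2.continuousOn
  have hcont2 : ContinuousOn (deriv (deriv φ)) I := contDiffOn_zero.mp h2.2.2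
  have hdd : ∀ r ∈ I, HasDerivAt (deriv φ) (deriv (deriv φ) r) r := fun r hr =>
    (hdφ'.differentiableAt (isOpen_Ioo.mem_nhds hr)).hasDerivAt
  -- vanishing of derivatives near 2R
  have hder0 : ∀ r ∈ Set.Ioo R₂ (2*R), deriv φ r = 0 := by
    intro r hr
    have hev : φ =ᶠ[nhds r] fun _ => (0:ℝ) :=
      Filter.eventuallyEq_of_mem (isOpen_Ioo.mem_nhds hr)
        (fun x hx => hzero x ⟨hx.1.le, hx.2.le⟩)
    rw [hev.deriv_eq]; simp
  have hder20 : ∀ r ∈ Set.Ioo R₂ (2*R), deriv (deriv φ) r = 0 := by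
    intro r hr
    have hev : deriv φ =ᶠ[nhds r] fun _ => (0:ℝ) :=
      Filter.eventuallyEq_of_mem (isOpen_Ioo.mem_nhds hr) (fun x hx => hder0 x hx)
    rw [hev.deriv_eq]; simp
  -- abbreviations
  set F : ℝ → ℝ := fun r =>
    r * Real.sqrt ((deriv (deriv φ) r / (1 + (deriv φ r)^2) ^ ((3:ℝ)/2))^2
      + (deriv φ r / (r * Real.sqrt (1 + (deriv φ r)^2)))^2) with hFdef
  set q : ℝ → ℝ := fun r => deriv φ r / Real.sqrt (1 + (deriv φ r)^2) with hqdef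
  set g : ℝ → ℝ := fun r => r * (deriv φ r / Real.sqrt (1 + (deriv φ r)^2)) with hgdef
  set G : ℝ → ℝ := fun r => deriv φ r / Real.sqrt (1 + (deriv φ r)^2)
    + r * (deriv (deriv φ) r / (1 + (deriv φ r)^2) ^ ((3:ℝ)/2)) with hGdef
  have hgG : ∀ r ∈ I, HasDerivAt g (G r) r := by
    intro r hr
    have h1' : HasDerivAt (fun s => deriv φ s / Real.sqrt (1 + (deriv φ s)^2))
        (deriv (deriv φ) r / (1 + (deriv φ r)^2) ^ ((3:ℝ)/2)) r := by
      have := (psi_hasDerivAt (deriv φ r)).comp r (hdd r hr)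
      simpa [Function.comp_def, inv_mul_eq_div] using this
    have := (hasDerivAt_id r).fun_mul h1'
    simpa [hGdef, hgdef] using this
  -- pointwise inequalities
  have hpt : ∀ r ∈ Set.Ioo R (2*R), G r ≤ F r ∧ F r ≤ G r - 2 * q r := by
    intro r hr
    have hr0 : 0 < r := hR.trans hr.1
    have hu : (0:ℝ) < 1 + (deriv φ r)^2 := by positivity
    have hs : (0:ℝ) < Real.sqrt (1 + (deriv φ r)^2) := Real.sqrt_pos.mpr hu
    have hrp : (0:ℝ) < (1 + (deriv φ r)^2) ^ ((3:ℝ)/2) := Real.rpow_pos_of_pos hu _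
    set A : ℝ := r * (deriv (deriv φ) r / (1 + (deriv φ r)^2) ^ ((3:ℝ)/2)) with hA
    set B : ℝ := deriv φ r / Real.sqrt (1 + (deriv φ r)^2) with hB
    have hA0 : 0 ≤ A := mul_nonneg hr0.le (div_nonneg (hconv r hr) hrp.le)
    have hB0 : B ≤ 0 := div_nonpos_of_nonpos_of_nonneg (hφ'neg r hr) hs.le
    have hF : F r = Real.sqrt (A^2 + B^2) := by
      have h1 : deriv φ r / (r * Real.sqrt (1 + (deriv φ r)^2)) = B / r := by
        rw [hB, div_div]; ring_nf
      have h2 : A^2 + B^2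
          = r^2 * ((deriv (deriv φ) r / (1 + (deriv φ r)^2) ^ ((3:ℝ)/2))^2 + (B/r)^2) := by
        rw [hA]
        field_simp
      simp only [hFdef, h1, h2]
      rw [Real.sqrt_mul (sq_nonneg r), Real.sqrt_sq hr0.le]
    have hGr : G r = A + B := by rw [hGdef]; ring
    have hq : q r = B := rfl
    obtain ⟨k1, k2⟩ := key_ineq A B hA0 hB0
    refine ⟨?_, ?_⟩
    · rw [hF, hGr]; exact k1
    · rw [hF, hGr, hq]; linarith
  -- continuity on [R, c]
  have hIccI : Set.Icc R c ⊆ I := fun x hx =>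
    ⟨hR.trans_le hx.1, lt_of_le_of_lt hx.2 hc2R⟩
  have cφ' : ContinuousOn (deriv φ) (Set.Icc R c) := hcont1.mono hIccI
  have cφ'' : ContinuousOn (deriv (deriv φ)) (Set.Icc R c) := hcont2.mono hIccI
  have cu : ContinuousOn (fun r => 1 + (deriv φ r)^2) (Set.Icc R c) :=
    continuousOn_const.add (cφ'.pow 2)
  have cup : ContinuousOn (fun r => (1 + (deriv φ r)^2) ^ ((3:ℝ)/2)) (Set.Icc R c) :=
    cu.rpow_const (fun x _ => Or.inr (by norm_num))
  have hupne : ∀ x ∈ Set.Icc R c, (1 + (deriv φ x)^2) ^ ((3:ℝ)/2) ≠ 0 :=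
    fun x _ => ne_of_gt (Real.rpow_pos_of_pos (by positivity) _)
  have ca : ContinuousOn (fun r => deriv (deriv φ) r / (1 + (deriv φ r)^2) ^ ((3:ℝ)/2))
      (Set.Icc R c) := cφ''.div cup hupne
  have csq : ContinuousOn (fun r => Real.sqrt (1 + (deriv φ r)^2)) (Set.Icc R c) := cu.sqrt
  have csqne : ∀ x ∈ Set.Icc R c, Real.sqrt (1 + (deriv φ x)^2) ≠ 0 :=
    fun x _ => ne_of_gt (Real.sqrt_pos.mpr (by positivity))
  have crs : ContinuousOn (fun r => r * Real.sqrt (1 + (deriv φ r)^2)) (Set.Icc R c) :=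
    continuousOn_id.mul csq
  have crsne : ∀ x ∈ Set.Icc R c, x * Real.sqrt (1 + (deriv φ x)^2) ≠ 0 := fun x hx =>
    mul_ne_zero (ne_of_gt (hR.trans_le hx.1)) (csqne x hx)
  have cb : ContinuousOn (fun r => deriv φ r / (r * Real.sqrt (1 + (deriv φ r)^2)))
      (Set.Icc R c) := cφ'.div crs crsne
  have hcF : ContinuousOn F (Set.Icc R c) :=
    continuousOn_id.mul (((ca.pow 2).add (cb.pow 2)).sqrt)
  have hcq : ContinuousOn q (Set.Icc R c) := cφ'.div csq csqne
  have hcG : ContinuousOn G (Set.Icc R c) := hcq.add (continuousOn_id.mul ca)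
  have hFint1 : IntervalIntegrable F volume R c :=
    hcF.intervalIntegrable_of_Icc hRc.le
  have hqint1 : IntervalIntegrable q volume R c :=
    hcq.intervalIntegrable_of_Icc hRc.le
  have hGint : IntervalIntegrable G volume R c :=
    hcG.intervalIntegrable_of_Icc hRc.le
  -- tail vanishing
  have hsing : ∀ᵐ x : ℝ, x ≠ 2*R := by
    have h0 : (volume ({2*R} : Set ℝ)) = 0 := measure_singleton _
    filter_upwards [measure_eq_zero_iff_ae_notMem.mp h0] with x hx
    simpa using hx
  have htailF : ∀ᵐ x : ℝ, x ∈ Set.uIoc c (2*R) → F x = 0 := by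
    filter_upwards [hsing] with x hx hmem
    rw [Set.uIoc_of_le hc2R.le] at hmem
    have hx' : x ∈ Set.Ioo R₂ (2*R) := ⟨hcR₂.trans hmem.1, lt_of_le_of_ne hmem.2 hx⟩
    simp [hFdef, hder0 x hx', hder20 x hx']
  have htailq : ∀ᵐ x : ℝ, x ∈ Set.uIoc c (2*R) → q x = 0 := by
    filter_upwards [hsing] with x hx hmem
    rw [Set.uIoc_of_le hc2R.le] at hmem
    have hx' : x ∈ Set.Ioo R₂ (2*R) := ⟨hcR₂.trans hmem.1, lt_of_le_of_ne hmem.2 hx⟩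
    simp [hqdef, hder0 x hx']
  have hFintT : IntervalIntegrable F volume c (2*R) :=
    (_root_.intervalIntegrable_const (c := (0:ℝ))).congr_ae
      ((ae_restrict_iff' measurableSet_uIoc).mpr (htailF.mono fun x hx hm => (hx hm).symm))
  have hqintT : IntervalIntegrable q volume c (2*R) :=
    (_root_.intervalIntegrable_const (c := (0:ℝ))).congr_ae
      ((ae_restrict_iff' measurableSet_uIoc).mpr (htailq.mono fun x hx hm => (hx hm).symm))
  have hFtail0 : ∫ r in c..(2*R), F r = 0 := by
    rw [integral_congr_ae htailF]; simp
  have hqtail0 : ∫ r in c..(2*R), q r = 0 := by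
    rw [integral_congr_ae htailq]; simp
  have hsplitF : ∫ r in R..(2*R), F r = ∫ r in R..c, F r := by
    rw [← integral_add_adjacent_intervals hFint1 hFintT, hFtail0, add_zero]
  have hsplitq : ∫ r in R..(2*R), q r = ∫ r in R..c, q r := by
    rw [← integral_add_adjacent_intervals hqint1 hqintT, hqtail0, add_zero]
  -- FTC
  have hFTC : ∫ r in R..c, G r = g c - g R :=
    integral_eq_sub_of_hasDerivAt
      (fun r hr => hgG r (hIccI ((Set.uIcc_of_le hRc.le) ▸ hr))) hGint
  have hgc : g c = 0 := by
    have hc0 : deriv φ c = 0 := hder0 c ⟨hcR₂, hc2R⟩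
    simp [hgdef, hc0]
  have hgR : g R = R * (deriv φ R / Real.sqrt (1 + (deriv φ R)^2)) := rfl
  -- monotone comparisons
  have hsingR : ∀ᵐ x : ℝ, x ≠ R := by
    have h0 : (volume ({R} : Set ℝ)) = 0 := measure_singleton _
    filter_upwards [measure_eq_zero_iff_ae_notMem.mp h0] with x hx
    simpa using hx
  have hmono1 : ∫ r in R..c, G r ≤ ∫ r in R..c, F r := by
    apply integral_mono_ae_restrict hRc.le hGint hFint1
    rw [Filter.EventuallyLE]
    apply (ae_restrict_iff' measurableSet_Icc).mpr
    filter_upwards [hsingR] with x hx hmem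
    exact (hpt x ⟨lt_of_le_of_ne hmem.1 (Ne.symm hx), lt_of_le_of_lt hmem.2 hc2R⟩).1
  have hGq : IntervalIntegrable (fun r => G r - 2 * q r) volume R c :=
    hGint.sub (hqint1.const_mul 2)
  have hmono2 : ∫ r in R..c, F r ≤ ∫ r in R..c, (G r - 2 * q r) := by
    apply integral_mono_ae_restrict hRc.le hFint1 hGq
    rw [Filter.EventuallyLE]
    apply (ae_restrict_iff' measurableSet_Icc).mpr
    filter_upwards [hsingR] with x hx hmem
    exact (hpt x ⟨lt_of_le_of_ne hmem.1 (Ne.symm hx), lt_of_le_of_lt hmem.2 hc2R⟩).2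
  have hGh_split : ∫ r in R..c, (G r - 2 * q r)
      = (∫ r in R..c, G r) - 2 * ∫ r in R..c, q r := by
    rw [integral_sub hGint (hqint1.const_mul 2), intervalIntegral.integral_const_mul]
  constructor
  · calc -R * deriv φ R / Real.sqrt (1 + (deriv φ R)^2) = g c - g R := by
          rw [hgc, hgR]; ring
      _ = ∫ r in R..c, G r := hFTC.symm
      _ ≤ ∫ r in R..c, F r := hmono1
      _ = ∫ r in R..(2*R), F r := hsplitF.symm
  · calc ∫ r in R..(2*R), F r = ∫ r in R..c, F r := hsplitF
      _ ≤ ∫ r in R..c, (G r - 2 * q r) := hmono2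
      _ = (∫ r in R..c, G r) - 2 * ∫ r in R..c, q r := hGh_split
      _ = (g c - g R) - 2 * ∫ r in R..(2*R), q r := by rw [hFTC, hsplitq]
      _ = -R * deriv φ R / Real.sqrt (1 + (deriv φ R)^2)
          - 2 * ∫ r in R..(2*R), q r := by rw [hgc, hgR]; ring
end

section
/- Let h, R > 0 and let u : [0,2R] → ℝ be any function in the class S with u'(R) < −2h/R, and suppose the lower bound ∫_Ω (f − u)² dx dy ≥ −πh³R/(12u'(R)) holds, where f = h·χ_{B(0,R)}. Define E(u) = ∫_Ω |W_u| + (1/2λ)∫_Ω (f−u)². If λ < h⁴/(48R), then E(u) > 4πR for every u ∈ S, where we use the lower bound ∫_Ω |W_u| ≥ −4πR·u'(R)/√(1+(u'(R))²). -/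
/-- contrast preservation: if `λ < h⁴/(48R)` then, using the lower bounds
`∫_Ω |W_u| ≥ −4πR·u'(R)/√(1+(u'(R))²)` and `∫_Ω (f−u)² ≥ −πh³R/(12u'(R))` valid for
`u ∈ S` (so `u'(R) < −2h/R`), the energy
`E(u) = ∫_Ω |W_u| + (1/2λ)∫_Ω (f−u)²` satisfies `E(u) > 4πR`. -/
theorem energy_exceeds_contrast
    (h R lam : ℝ) (hh : 0 < h) (hR : 0 < R) (hlam : 0 < lam)
    (hcond : lam < h^4 / (48*R))
    (uR' WInt FInt : ℝ)
    (huR' : uR' < -(2*h/R))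
    (hW : WInt ≥ -(4*Real.pi*R) * uR' / Real.sqrt (1 + uR'^2))
    (hF : FInt ≥ -(Real.pi * h^3 * R) / (12 * uR')) :
    WInt + (1/(2*lam)) * FInt > 4*Real.pi*R := by
  have hpi := Real.pi_pos
  set x : ℝ := -uR' with hxdef
  have huR : uR' = -x := by simp [hxdef]
  have h2hR : 0 < 2*h/R := by positivity
  have hx : 2*h/R < x := by simp only [hxdef]; linarith
  have hxpos : 0 < x := lt_trans h2hR hx
  set s : ℝ := Real.sqrt (1 + uR'^2) with hsdef
  have hsnn : 0 ≤ s := Real.sqrt_nonneg _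
  have hs2 : s^2 = 1 + x^2 := by
    rw [hsdef, Real.sq_sqrt (by positivity)]
    rw [huR]; ring
  clear_value s
  rw [huR] at hW hF
  clear_value x
  clear hxdef hsdef huR'
  have hsx : x < s := by nlinarith
  have hspos : 0 < s := lt_trans hxpos hsx
  have hsxpos : 0 < s + x := by linarith
  have hsx1 : (s - x) * (s + x) = 1 := by nlinarith
  -- rewrite the two lower bounds
  have hW' : WInt ≥ 4*Real.pi*R*x / s := by
    rwa [show -(4*Real.pi*R) * (-x) = 4*Real.pi*R*x by ring] at hW
  have hF' : FInt ≥ Real.pi*h^3*R / (12*x) := by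
    rwa [show -(Real.pi*h^3*R) / (12*(-x)) = Real.pi*h^3*R / (12*x) by
      field_simp] at hF
  -- the key inequality
  have hc2 : lam * (48*R) < h^4 := (lt_div_iff₀ (by positivity : (0:ℝ) < 48*R)).mp hcond
  have hxR : 2*h < x*R := by rw [div_lt_iff₀ hR] at hx; linarith
  have hlamx : 96*lam*x < h^3 * s * (s + x) := by
    have h1 : 96*lam*x < 2*h^4*x/R := by
      rw [lt_div_iff₀ hR]
      nlinarith [mul_lt_mul_of_pos_left hc2 (by positivity : (0:ℝ) < 2*x)]
    have h2 : 2*h^4*x/R ≤ 2*h^3*x^2 := by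
      rw [div_le_iff₀ hR]
      nlinarith [mul_pos hxpos (pow_pos hh 3)]
    have h3 : 2*h^3*x^2 < h^3 * s * (s+x) := by
      nlinarith [mul_pos (pow_pos hh 3) (mul_pos (sub_pos.mpr hsx) (show (0:ℝ) < s + 2*x by linarith))]
    exact lt_of_lt_of_le h1 (le_of_lt (lt_of_le_of_lt h2 h3))
  have hkey : 96*lam*x*(s-x) < h^3 * s := by
    have e : 96*lam*x*(s-x)*(s+x) = 96*lam*x := by rw [mul_assoc, hsx1, mul_one]
    have h5 : 96*lam*x*(s-x)*(s+x) < (h^3 * s)*(s+x) := by rw [e]; nlinarith [hlamx]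
    exact lt_of_mul_lt_mul_right h5 (le_of_lt hsxpos)
  -- combine
  have hsum : 4*Real.pi*R*x/s + (1/(2*lam)) * (Real.pi*h^3*R/(12*x)) > 4*Real.pi*R := by
    have e1 : 4*Real.pi*R*x/s = 4*Real.pi*R - 4*Real.pi*R*(s-x)/s := by
      field_simp; ring
    have e2 : (1/(2*lam)) * (Real.pi*h^3*R/(12*x)) = Real.pi*h^3*R/(24*lam*x) := by
      field_simp; ring
    rw [e1, e2]
    have h4 : 4*Real.pi*R*(s-x)/s < Real.pi*h^3*R/(24*lam*x) := by
      rw [div_lt_div_iff₀ hspos (by positivity)]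
      have h6 := mul_lt_mul_of_pos_left hkey (mul_pos hpi hR)
      calc 4*Real.pi*R*(s-x)*(24*lam*x) = Real.pi*R*(96*lam*x*(s-x)) := by ring
        _ < Real.pi*R*(h^3*s) := h6
        _ = Real.pi*h^3*R*s := by ring
    linarith
  have hFpos : (0:ℝ) < Real.pi*h^3*R/(12*x) := by positivity
  have : (1/(2*lam)) * FInt ≥ (1/(2*lam)) * (Real.pi*h^3*R/(12*x)) := by
    apply mul_le_mul_of_nonneg_left hF' (by positivity)
  linarith
end

section
/- For the characteristic-function image f = h·χ_{B(0,R)} on Ω = (−2R,2R)², defined as a limit of smooth radial approximants uₙ ∈ S, the total variation satisfies ∫_Ω |∇f| dx dy = 2πRh (the perimeter of the disk times the jump height), whereas the Weingarten regularizer satisfies ∫_Ω |W_f| dx dy = 4πR, independent of the height h. -/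
open Filter MeasureTheory intervalIntegral

lemma aux_int_zero {F : ℝ → ℝ} {u v : ℝ} (huv : u ≤ v)
    (hF : ∀ x ∈ Set.Ioo u v, F x = 0) : ∫ x in u..v, F x = 0 := by
  rw [intervalIntegral.integral_of_le huv, MeasureTheory.integral_Ioc_eq_integral_Ioo,
    MeasureTheory.setIntegral_congr_fun measurableSet_Ioo (g := fun _ => 0) hF]
  simp

lemma aux_int_integrable {F : ℝ → ℝ} {u v : ℝ} (huv : u ≤ v)
    (hF : ∀ x ∈ Set.Ioo u v, F x = 0) : IntervalIntegrable F volume u v := by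
  rw [intervalIntegrable_iff_integrableOn_Ioo_of_le huv]
  exact (MeasureTheory.integrableOn_congr_fun hF measurableSet_Ioo).mpr
    MeasureTheory.integrableOn_zero

lemma aux_split {F : ℝ → ℝ} {u c d v : ℝ} (h0c : u ≤ c) (hcd : c ≤ d) (hdT : d ≤ v)
    (hz1 : ∀ x ∈ Set.Ioo u c, F x = 0) (hz2 : ∀ x ∈ Set.Ioo d v, F x = 0)
    (hcont : ContinuousOn F (Set.Icc c d)) :
    ∫ x in u..v, F x = ∫ x in c..d, F x := by
  have i2 : IntervalIntegrable F volume c d :=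
    ContinuousOn.intervalIntegrable (by rwa [Set.uIcc_of_le hcd])
  have i1 : IntervalIntegrable F volume u c := aux_int_integrable h0c hz1
  have i3 : IntervalIntegrable F volume d v := aux_int_integrable hdT hz2
  have e1 := intervalIntegral.integral_add_adjacent_intervals i1 (i2.trans i3)
  have e2 := intervalIntegral.integral_add_adjacent_intervals i2 i3
  rw [aux_int_zero h0c hz1] at e1
  rw [aux_int_zero hdT hz2] at e2
  linarith

lemma aux_rpow (x : ℝ) : (1+x^2)^((3:ℝ)/2) = Real.sqrt (1+x^2)^3 := by
  have h : (0:ℝ) ≤ 1+x^2 := by positivity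
  rw [Real.sqrt_eq_rpow, ← Real.rpow_natCast ((1+x^2)^((1:ℝ)/2)) 3, ← Real.rpow_mul h]
  norm_num

lemma aux_gderiv (x : ℝ) :
    HasDerivAt (fun t : ℝ => t / Real.sqrt (1 + t^2)) (1 / (1+x^2)^((3:ℝ)/2)) x := by
  have hpos : (0:ℝ) < 1 + x^2 := by positivity
  have hs : 0 < Real.sqrt (1 + x^2) := Real.sqrt_pos.mpr hpos
  have h1 : HasDerivAt (fun t:ℝ => 1 + t^2) (2*x) x := by
    simpa using ((hasDerivAt_pow 2 x).const_add 1)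
  have h2 : HasDerivAt (fun t:ℝ => Real.sqrt (1+t^2)) (2*x/(2*Real.sqrt (1+x^2))) x :=
    h1.sqrt hpos.ne'
  have h3 := (hasDerivAt_id x).div h2 hs.ne'
  convert h3 using 1
  · rfl
  · rfl
  · rfl
  have hsq : Real.sqrt (1+x^2)^2 = 1+x^2 := Real.sq_sqrt hpos.le
  have e1 : (1 * Real.sqrt (1+x^2) - id x * (2 * x / (2 * Real.sqrt (1+x^2))))
      = 1 / Real.sqrt (1+x^2) := by
    simp only [id_eq, one_mul]
    field_simp [hs.ne']
    linarith [hsq]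
  rw [aux_rpow, e1, div_div, ← pow_succ']

lemma aux_sqrt_ineq (p q : ℝ) : Real.sqrt (p^2 + q^2) ≤ |p| + |q| := by
  have h1 : p^2 + q^2 ≤ (|p| + |q|)^2 := by
    nlinarith [sq_abs p, sq_abs q, mul_nonneg (abs_nonneg p) (abs_nonneg q)]
  calc Real.sqrt (p^2 + q^2) ≤ Real.sqrt ((|p| + |q|)^2) := Real.sqrt_le_sqrt h1
    _ = |p| + |q| := Real.sqrt_sq (by positivity)

lemma aux_sqrt_ineq2 (p q : ℝ) : |p| ≤ Real.sqrt (p^2 + q^2) := by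
  rw [← Real.sqrt_sq_eq_abs]
  exact Real.sqrt_le_sqrt (by nlinarith [sq_nonneg q])

set_option maxHeartbeats 1600000 in
lemma key (R h : ℝ) (hR : 0 < R) (hh : 0 < h) (ψ : ℝ → ℝ) {a b : ℝ}
    (hcd : ContDiffOn ℝ 2 ψ (Set.Icc 0 (2*R)))
    (ha0 : 0 < a) (haR : a < R) (hRb : R < b) (hb2R : b < 2*R)
    (hconst1 : ∀ r ∈ Set.Icc 0 a, ψ r = h)
    (hconst2 : ∀ r ∈ Set.Icc b (2*R), ψ r = 0)
    (hconc : ∀ r ∈ Set.Ioo 0 R, deriv (deriv ψ) r ≤ 0)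
    (hconv : ∀ r ∈ Set.Ioo R (2*R), 0 ≤ deriv (deriv ψ) r) :
    (a*h ≤ ∫ r in (0:ℝ)..(2*R), r * |deriv ψ r|) ∧
    ((∫ r in (0:ℝ)..(2*R), r * |deriv ψ r|) ≤ a*h + h*(b-a)) ∧
    (-(2*R*(deriv ψ R / Real.sqrt (1 + (deriv ψ R)^2)))
        + (∫ r in (0:ℝ)..R, deriv ψ r / Real.sqrt (1 + (deriv ψ r)^2))
        - (∫ r in R..(2*R), deriv ψ r / Real.sqrt (1 + (deriv ψ r)^2))
      ≤ ∫ r in (0:ℝ)..(2*R),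
        r * Real.sqrt ((deriv (deriv ψ) r / (1 + (deriv ψ r)^2) ^ ((3:ℝ)/2))^2
          + (deriv ψ r / (r * Real.sqrt (1 + (deriv ψ r)^2)))^2)) ∧
    ((∫ r in (0:ℝ)..(2*R),
        r * Real.sqrt ((deriv (deriv ψ) r / (1 + (deriv ψ r)^2) ^ ((3:ℝ)/2))^2
          + (deriv ψ r / (r * Real.sqrt (1 + (deriv ψ r)^2)))^2))
      ≤ -(2*R*(deriv ψ R / Real.sqrt (1 + (deriv ψ R)^2)))
        - 2 * (∫ r in R..(2*R), deriv ψ r / Real.sqrt (1 + (deriv ψ r)^2))) := by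
  have h2R : 0 < 2*R := by linarith
  set s : Set ℝ := Set.Ioo 0 (2*R) with hs_def
  have hs_open : IsOpen s := isOpen_Ioo
  have hcd' : ContDiffOn ℝ 2 ψ s := hcd.mono Set.Ioo_subset_Icc_self
  have hψ'cont : ContinuousOn (deriv ψ) s :=
    hcd'.continuousOn_deriv_of_isOpen hs_open one_le_two
  have hcd'' : ContDiffOn ℝ 1 (deriv ψ) s :=
    hcd'.deriv_of_isOpen hs_open (by norm_num)
  have hψ''cont : ContinuousOn (deriv (deriv ψ)) s :=
    hcd''.continuousOn_deriv_of_isOpen hs_open le_rfl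
  have hdiff : ∀ r ∈ s, HasDerivAt ψ (deriv ψ r) r := fun r hr =>
    (((hcd'.differentiableOn two_ne_zero).differentiableAt (hs_open.mem_nhds hr))).hasDerivAt
  have hdiff2 : ∀ r ∈ s, HasDerivAt (deriv ψ) (deriv (deriv ψ) r) r := fun r hr =>
    ((hcd''.differentiableOn one_ne_zero).differentiableAt (hs_open.mem_nhds hr)).hasDerivAt
  -- vanishing of derivatives near the ends
  have hz1' : ∀ r ∈ Set.Ioo 0 a, deriv ψ r = 0 := by
    intro r hr
    have he : ψ =ᶠ[nhds r] fun _ => h :=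
      Filter.eventually_of_mem (Ioo_mem_nhds hr.1 hr.2)
        (fun y hy => hconst1 y ⟨hy.1.le, hy.2.le⟩)
    rw [he.deriv_eq, deriv_const]
  have hz1'' : ∀ r ∈ Set.Ioo 0 a, deriv (deriv ψ) r = 0 := by
    intro r hr
    have he : deriv ψ =ᶠ[nhds r] fun _ => 0 :=
      Filter.eventually_of_mem (Ioo_mem_nhds hr.1 hr.2) (fun y hy => hz1' y hy)
    rw [he.deriv_eq, deriv_const]
  have hz2' : ∀ r ∈ Set.Ioo b (2*R), deriv ψ r = 0 := by
    intro r hr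
    have he : ψ =ᶠ[nhds r] fun _ => 0 :=
      Filter.eventually_of_mem (Ioo_mem_nhds hr.1 hr.2)
        (fun y hy => hconst2 y ⟨hy.1.le, hy.2.le⟩)
    rw [he.deriv_eq, deriv_const]
  have hz2'' : ∀ r ∈ Set.Ioo b (2*R), deriv (deriv ψ) r = 0 := by
    intro r hr
    have he : deriv ψ =ᶠ[nhds r] fun _ => 0 :=
      Filter.eventually_of_mem (Ioo_mem_nhds hr.1 hr.2) (fun y hy => hz2' y hy)
    rw [he.deriv_eq, deriv_const]
  -- auxiliary points
  set c : ℝ := a/2 with hc_def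
  set d : ℝ := (b + 2*R)/2 with hd_def
  have hc0 : 0 < c := by simp [hc_def]; linarith
  have hca : c < a := by simp [hc_def]; linarith
  have hcR : c < R := by linarith
  have hbd : b < d := by simp [hd_def]; linarith
  have hd2R : d < 2*R := by simp [hd_def]; linarith
  have hRd : R < d := by linarith
  have hIccs : ∀ {u v : ℝ}, 0 < u → v < 2*R → Set.Icc u v ⊆ s := by
    intro u v hu hv x hx
    exact ⟨lt_of_lt_of_le hu hx.1, lt_of_le_of_lt hx.2 hv⟩
  -- ψ' ≤ 0 on s
  have hanti : AntitoneOn (deriv ψ) (Set.Icc c R) := by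
    apply antitoneOn_of_deriv_nonpos (convex_Icc c R)
      (hψ'cont.mono (hIccs hc0 (by linarith)))
    · rw [interior_Icc]
      intro x hx
      exact ((hdiff2 x ⟨by linarith [hx.1], by linarith [hx.2]⟩).differentiableAt).differentiableWithinAt
    · rw [interior_Icc]
      intro x hx
      exact hconc x ⟨by linarith [hx.1], hx.2⟩
  have hmono : MonotoneOn (deriv ψ) (Set.Icc R d) := by
    apply monotoneOn_of_deriv_nonneg (convex_Icc R d)
      (hψ'cont.mono (hIccs hR hd2R))
    · rw [interior_Icc]
      intro x hx
      exact ((hdiff2 x ⟨by linarith [hx.1], by linarith [hx.2]⟩).differentiableAt).differentiableWithinAt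
    · rw [interior_Icc]
      intro x hx
      exact hconv x ⟨hx.1, by linarith [hx.2]⟩
  have hψ'c : deriv ψ c = 0 := hz1' c ⟨hc0, hca⟩
  have hψ'd : deriv ψ d = 0 := hz2' d ⟨hbd, hd2R⟩
  have hψ'le : ∀ r ∈ s, deriv ψ r ≤ 0 := by
    intro r hr
    rcases le_or_gt r c with hrc | hrc
    · rw [hz1' r ⟨hr.1, lt_of_le_of_lt hrc hca⟩]
    · rcases le_or_gt r R with hrR | hrR
      · calc deriv ψ r ≤ deriv ψ c :=
              hanti ⟨le_refl c, hcR.le⟩ ⟨hrc.le, hrR⟩ hrc.le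
          _ = 0 := hψ'c
      · rcases le_or_gt r d with hrd | hrd
        · calc deriv ψ r ≤ deriv ψ d := hmono ⟨hrR.le, hrd⟩ ⟨hRd.le, le_refl d⟩ hrd
            _ = 0 := hψ'd
        · rw [hz2' r ⟨by linarith, hr.2⟩]
  -- second derivative vanishes at R
  have hψ''R : deriv (deriv ψ) R = 0 := by
    have hRs : R ∈ s := ⟨hR, by linarith⟩
    have hca' : ContinuousAt (deriv (deriv ψ)) R :=
      hψ''cont.continuousAt (hs_open.mem_nhds hRs)
    have h1 : deriv (deriv ψ) R ≤ 0 := by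
      apply le_of_tendsto (hca'.tendsto.mono_left (nhdsWithin_le_nhds (s := Set.Iio R)))
      filter_upwards [Ioo_mem_nhdsLT_of_mem (a := (0:ℝ)) (c := R) ⟨hR, le_refl R⟩] with x hx
      exact hconc x hx
    have h2 : 0 ≤ deriv (deriv ψ) R := by
      apply ge_of_tendsto (hca'.tendsto.mono_left (nhdsWithin_le_nhds (s := Set.Ioi R)))
      filter_upwards [Ioo_mem_nhdsGT_of_mem (show R ∈ Set.Ico R (2*R) from ⟨le_refl R, by linarith⟩)] with x hx
      exact hconv x hx
    linarith

  -- TV part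
  have hab : a ≤ b := by linarith
  have hψanti : AntitoneOn ψ (Set.Icc a b) := by
    apply antitoneOn_of_deriv_nonpos (convex_Icc a b)
      (hcd.continuousOn.mono (Set.Icc_subset_Icc (by linarith) (by linarith)))
    · rw [interior_Icc]
      intro x hx
      exact ((hdiff x ⟨by linarith [hx.1], by linarith [hx.2]⟩).differentiableAt).differentiableWithinAt
    · rw [interior_Icc]
      intro x hx
      exact hψ'le x ⟨by linarith [hx.1], by linarith [hx.2]⟩
  have hψa : ψ a = h := hconst1 a ⟨ha0.le, le_refl a⟩
  have hψb : ψ b = 0 := hconst2 b ⟨le_refl b, hb2R.le⟩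
  have hTVsplit : (∫ r in (0:ℝ)..(2*R), r * |deriv ψ r|) = ∫ r in a..b, r * |deriv ψ r| := by
    apply aux_split ha0.le hab hb2R.le
    · intro x hx; rw [hz1' x hx]; simp
    · intro x hx; rw [hz2' x hx]; simp
    · exact continuousOn_id.mul ((hψ'cont.mono (hIccs ha0 hb2R)).abs)
  have hIBP := intervalIntegral.integral_mul_deriv_eq_deriv_mul (u := fun x:ℝ => x)
      (v := ψ) (u' := fun _ => (1:ℝ)) (v' := deriv ψ) (a := a) (b := b)
      (fun x _ => hasDerivAt_id x)
      (fun x hx => hdiff x (hIccs ha0 hb2R (by rwa [Set.uIcc_of_le hab] at hx)))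
      intervalIntegrable_const
      ((hψ'cont.mono (by rw [Set.uIcc_of_le hab]; exact hIccs ha0 hb2R)).intervalIntegrable)
  have hψbound : ∀ x ∈ Set.Icc a b, 0 ≤ ψ x ∧ ψ x ≤ h := by
    intro x hx
    constructor
    · rw [← hψb]; exact hψanti hx ⟨hab, le_refl b⟩ hx.2
    · rw [← hψa]; exact hψanti ⟨le_refl a, hab⟩ hx hx.1
  have hψint : IntervalIntegrable ψ volume a b :=
    (hcd.continuousOn.mono (by rw [Set.uIcc_of_le hab]; exact Set.Icc_subset_Icc (by linarith) (by linarith))).intervalIntegrable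
  have hint_psi_lb : 0 ≤ ∫ x in a..b, ψ x := by
    apply intervalIntegral.integral_nonneg hab
    intro x hx; exact (hψbound x hx).1
  have hint_psi_ub : (∫ x in a..b, ψ x) ≤ h * (b - a) := by
    have h1 := intervalIntegral.integral_mono_on hab hψint intervalIntegrable_const
      (fun x hx => (hψbound x hx).2)
    rw [intervalIntegral.integral_const, smul_eq_mul] at h1
    linarith
  have hTVeq : (∫ r in (0:ℝ)..(2*R), r * |deriv ψ r|) = a*h + ∫ x in a..b, ψ x := by
    rw [hTVsplit]
    have e1 : (∫ r in a..b, r * |deriv ψ r|) = ∫ r in a..b, -(r * deriv ψ r) := by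
      apply intervalIntegral.integral_congr
      intro x hx
      rw [Set.uIcc_of_le hab] at hx
      show x * |deriv ψ x| = -(x * deriv ψ x)
      rw [abs_of_nonpos (hψ'le x (hIccs ha0 hb2R hx))]
      ring
    rw [e1, intervalIntegral.integral_neg, hIBP, hψa, hψb]
    simp only [one_mul]
    ring

  -- Weingarten part
  have hsqrt_pos : ∀ x : ℝ, 0 < Real.sqrt (1 + x^2) :=
    fun x => Real.sqrt_pos.mpr (by positivity)
  set G : ℝ → ℝ := fun r => deriv ψ r / Real.sqrt (1 + (deriv ψ r)^2) with hG_def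
  set K1 : ℝ → ℝ := fun r => deriv (deriv ψ) r / (1 + (deriv ψ r)^2) ^ ((3:ℝ)/2) with hK1_def
  set Wf : ℝ → ℝ := fun r => r * Real.sqrt ((K1 r)^2
      + (deriv ψ r / (r * Real.sqrt (1 + (deriv ψ r)^2)))^2) with hWf_def
  have hsqcont : ContinuousOn (fun r => Real.sqrt (1 + (deriv ψ r)^2)) s :=
    Real.continuous_sqrt.comp_continuousOn (continuousOn_const.add (hψ'cont.pow 2))
  have hGcont : ContinuousOn G s :=
    hψ'cont.div hsqcont (fun x _ => (hsqrt_pos _).ne')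
  have hK1cont : ContinuousOn K1 s := by
    apply hψ''cont.div
      ((continuousOn_const.add (hψ'cont.pow 2)).rpow_const (fun x _ => Or.inr (by norm_num)))
    intro x _
    exact (Real.rpow_pos_of_pos (by simp only [Pi.add_apply, Pi.pow_apply]; positivity) _).ne'
  have hGz1 : ∀ r ∈ Set.Ioo 0 a, G r = 0 := by
    intro r hr; simp only [hG_def]; rw [hz1' r hr]; simp
  have hGz2 : ∀ r ∈ Set.Ioo b (2*R), G r = 0 := by
    intro r hr; simp only [hG_def]; rw [hz2' r hr]; simp
  have hK1z1 : ∀ r ∈ Set.Ioo 0 a, K1 r = 0 := by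
    intro r hr; simp only [hK1_def]; rw [hz1'' r hr]; simp
  have hK1z2 : ∀ r ∈ Set.Ioo b (2*R), K1 r = 0 := by
    intro r hr; simp only [hK1_def]; rw [hz2'' r hr]; simp
  have hGderiv : ∀ r ∈ s, HasDerivAt G (K1 r) r := by
    intro r hr
    have h' : HasDerivAt (fun x => (fun t : ℝ => t / Real.sqrt (1 + t^2)) (deriv ψ x))
        (1 / (1 + (deriv ψ r)^2)^((3:ℝ)/2) * deriv (deriv ψ) r) r :=
      HasDerivAt.comp r (aux_gderiv (deriv ψ r)) (hdiff2 r hr)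
    have h'' : (1 / (1 + (deriv ψ r)^2)^((3:ℝ)/2)) * deriv (deriv ψ) r = K1 r :=
      one_div_mul_eq_div _ _
    exact h'' ▸ h'
  have hGc : G c = 0 := by simp only [hG_def]; rw [hψ'c]; simp
  have hGd : G d = 0 := by simp only [hG_def]; rw [hψ'd]; simp
  have hGle : ∀ r ∈ s, G r ≤ 0 := by
    intro r hr
    exact div_nonpos_of_nonpos_of_nonneg (hψ'le r hr) (Real.sqrt_nonneg _)
  have hK1nonpos : ∀ x ∈ Set.Icc c R, K1 x ≤ 0 := by
    intro x hx
    have hnum : deriv (deriv ψ) x ≤ 0 := by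
      rcases eq_or_lt_of_le hx.2 with he | hlt
      · rw [he, hψ''R]
      · exact hconc x ⟨by linarith [hx.1], hlt⟩
    exact div_nonpos_of_nonpos_of_nonneg hnum (Real.rpow_pos_of_pos (by positivity) _).le
  have hK1nonneg : ∀ x ∈ Set.Icc R d, 0 ≤ K1 x := by
    intro x hx
    have hnum : 0 ≤ deriv (deriv ψ) x := by
      rcases eq_or_lt_of_le hx.1 with he | hlt
      · rw [← he, hψ''R]
      · exact hconv x ⟨hlt, by linarith [hx.2]⟩
    exact div_nonneg hnum (Real.rpow_pos_of_pos (by positivity) _).le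
  have hJ1 : (∫ r in (0:ℝ)..R, G r) = ∫ r in c..R, G r := by
    apply aux_split hc0.le hcR.le (le_refl R)
    · intro x hx; exact hGz1 x ⟨hx.1, lt_of_lt_of_le hx.2 hca.le⟩
    · intro x hx; exact absurd hx (by simp)
    · exact hGcont.mono (hIccs hc0 (by linarith))
  have hJ2 : (∫ r in R..(2*R), G r) = ∫ r in R..d, G r := by
    apply aux_split (le_refl R) hRd.le hd2R.le
    · intro x hx; exact absurd hx (by simp)
    · intro x hx; exact hGz2 x ⟨by linarith [hx.1], hx.2⟩
    · exact hGcont.mono (hIccs hR hd2R)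
  have hIBP1 := intervalIntegral.integral_mul_deriv_eq_deriv_mul (u := fun x:ℝ => x)
      (v := G) (u' := fun _ => (1:ℝ)) (v' := K1) (a := c) (b := R)
      (fun x _ => hasDerivAt_id x)
      (fun x hx => hGderiv x (hIccs (u:=c) (v:=R) hc0 (by linarith) (by rwa [Set.uIcc_of_le hcR.le] at hx)))
      intervalIntegrable_const
      ((hK1cont.mono (by rw [Set.uIcc_of_le hcR.le]; exact hIccs hc0 (by linarith))).intervalIntegrable)
  have hIBP2 := intervalIntegral.integral_mul_deriv_eq_deriv_mul (u := fun x:ℝ => x)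
      (v := G) (u' := fun _ => (1:ℝ)) (v' := K1) (a := R) (b := d)
      (fun x _ => hasDerivAt_id x)
      (fun x hx => hGderiv x (hIccs hR hd2R (by rwa [Set.uIcc_of_le hRd.le] at hx)))
      intervalIntegrable_const
      ((hK1cont.mono (by rw [Set.uIcc_of_le hRd.le]; exact hIccs hR hd2R)).intervalIntegrable)
  have hWz1 : ∀ r ∈ Set.Ioo 0 a, Wf r = 0 := by
    intro r hr
    simp only [hWf_def]
    rw [hz1' r hr, hK1z1 r hr]
    simp
  have hWz2 : ∀ r ∈ Set.Ioo b (2*R), Wf r = 0 := by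
    intro r hr
    simp only [hWf_def]
    rw [hz2' r hr, hK1z2 r hr]
    simp
  have hWcont : ContinuousOn Wf (Set.Icc c d) := by
    apply continuousOn_id.mul
    apply Real.continuous_sqrt.comp_continuousOn
    apply ContinuousOn.add
    · exact ((hK1cont.mono (hIccs hc0 hd2R)).pow 2)
    · apply ContinuousOn.pow
      apply (hψ'cont.mono (hIccs hc0 hd2R)).div
        (continuousOn_id.mul (hsqcont.mono (hIccs hc0 hd2R)))
      intro x hx
      have hx0 : 0 < x := lt_of_lt_of_le hc0 hx.1
      exact (mul_pos hx0 (hsqrt_pos _)).ne'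
  have hWsplit : (∫ r in (0:ℝ)..(2*R), Wf r) = ∫ r in c..d, Wf r :=
    aux_split hc0.le (by linarith) hd2R.le
      (fun x hx => hWz1 x ⟨hx.1, lt_of_lt_of_le hx.2 hca.le⟩)
      (fun x hx => hWz2 x ⟨by linarith [hx.1], hx.2⟩) hWcont
  have hlow_pt : ∀ x ∈ Set.Icc c d, x * |K1 x| ≤ Wf x := by
    intro x hx
    have hx0 : (0:ℝ) ≤ x := le_trans hc0.le hx.1
    exact mul_le_mul_of_nonneg_left (aux_sqrt_ineq2 _ _) hx0
  have hup_pt : ∀ x ∈ Set.Icc c d, Wf x ≤ x * |K1 x| + |G x| := by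
    intro x hx
    have hx0 : (0:ℝ) < x := lt_of_lt_of_le hc0 hx.1
    have e2 : x * (deriv ψ x / (x * Real.sqrt (1 + (deriv ψ x)^2))) = G x := by
      rw [← mul_div_assoc, mul_div_mul_left _ _ hx0.ne']
    calc Wf x ≤ x * (|K1 x| + |deriv ψ x / (x * Real.sqrt (1 + (deriv ψ x)^2))|) :=
          mul_le_mul_of_nonneg_left (aux_sqrt_ineq _ _) hx0.le
      _ = x * |K1 x| + |x * (deriv ψ x / (x * Real.sqrt (1 + (deriv ψ x)^2)))| := by
          rw [abs_mul, abs_of_pos hx0]; ring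
      _ = x * |K1 x| + |G x| := by rw [e2]

  have hcd_le : c ≤ d := le_trans hcR.le hRd.le
  have hK1abs_int1 : IntervalIntegrable (fun x => x * |K1 x|) volume c R :=
    ContinuousOn.intervalIntegrable (by
      rw [Set.uIcc_of_le hcR.le]
      exact continuousOn_id.mul ((hK1cont.mono (hIccs hc0 (by linarith))).abs))
  have hK1abs_int2 : IntervalIntegrable (fun x => x * |K1 x|) volume R d :=
    ContinuousOn.intervalIntegrable (by
      rw [Set.uIcc_of_le hRd.le]
      exact continuousOn_id.mul ((hK1cont.mono (hIccs hR hd2R)).abs))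
  have hK1abs_int_cd : IntervalIntegrable (fun x => x * |K1 x|) volume c d :=
    hK1abs_int1.trans hK1abs_int2
  have hGint1 : IntervalIntegrable G volume c R :=
    ContinuousOn.intervalIntegrable (by
      rw [Set.uIcc_of_le hcR.le]; exact hGcont.mono (hIccs hc0 (by linarith)))
  have hGint2 : IntervalIntegrable G volume R d :=
    ContinuousOn.intervalIntegrable (by
      rw [Set.uIcc_of_le hRd.le]; exact hGcont.mono (hIccs hR hd2R))
  have hGabs_int : IntervalIntegrable (fun x => |G x|) volume c d :=
    ContinuousOn.intervalIntegrable (by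
      rw [Set.uIcc_of_le hcd_le]; exact (hGcont.mono (hIccs hc0 hd2R)).abs)
  have hWint : IntervalIntegrable Wf volume c d :=
    ContinuousOn.intervalIntegrable (by rw [Set.uIcc_of_le hcd_le]; exact hWcont)
  have e3 : (∫ x in c..R, x * |K1 x|) = -(R * G R) + ∫ r in c..R, G r := by
    have ec : (∫ x in c..R, x * |K1 x|) = ∫ x in c..R, -(x * K1 x) := by
      apply intervalIntegral.integral_congr
      intro x hx
      rw [Set.uIcc_of_le hcR.le] at hx
      show x * |K1 x| = -(x * K1 x)
      rw [abs_of_nonpos (hK1nonpos x hx)]; ring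
    rw [ec, intervalIntegral.integral_neg, hIBP1, hGc]
    simp only [one_mul]
    ring
  have e4 : (∫ x in R..d, x * |K1 x|) = -(R * G R) - ∫ r in R..d, G r := by
    have ec : (∫ x in R..d, x * |K1 x|) = ∫ x in R..d, x * K1 x := by
      apply intervalIntegral.integral_congr
      intro x hx
      rw [Set.uIcc_of_le hRd.le] at hx
      show x * |K1 x| = x * K1 x
      rw [abs_of_nonneg (hK1nonneg x hx)]
    rw [ec, hIBP2, hGd]
    simp only [one_mul]
    ring
  have e5 : (∫ x in c..d, x * |K1 x|)
      = -(2*R*(G R)) + (∫ r in c..R, G r) - (∫ r in R..d, G r) := by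
    rw [← intervalIntegral.integral_add_adjacent_intervals hK1abs_int1 hK1abs_int2, e3, e4]
    ring
  have e6 : (∫ x in c..d, |G x|) = -((∫ r in c..R, G r) + (∫ r in R..d, G r)) := by
    have ec : (∫ x in c..d, |G x|) = ∫ x in c..d, -(G x) := by
      apply intervalIntegral.integral_congr
      intro x hx
      rw [Set.uIcc_of_le hcd_le] at hx
      show |G x| = -(G x)
      rw [abs_of_nonpos (hGle x (hIccs hc0 hd2R hx))]
    rw [ec, intervalIntegral.integral_neg,
      ← intervalIntegral.integral_add_adjacent_intervals hGint1 hGint2]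
  have hGR : deriv ψ R / Real.sqrt (1 + (deriv ψ R)^2) = G R := rfl
  refine ⟨by rw [hTVeq]; linarith, by rw [hTVeq]; linarith, ?_, ?_⟩
  · rw [hGR, hWsplit, hJ1, hJ2, ← e5]
    exact intervalIntegral.integral_mono_on hcd_le hK1abs_int_cd hWint hlow_pt
  · rw [hGR, hWsplit, hJ2]
    have h7 : (∫ r in c..d, Wf r) ≤ ∫ x in c..d, (x * |K1 x| + |G x|) :=
      intervalIntegral.integral_mono_on hcd_le hWint (hK1abs_int_cd.add hGabs_int) hup_pt
    have h8 : (∫ x in c..d, (x * |K1 x| + |G x|))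
        = (∫ x in c..d, x * |K1 x|) + ∫ x in c..d, |G x| :=
      intervalIntegral.integral_add hK1abs_int_cd hGabs_int
    rw [h8, e5, e6] at h7
    linarith



lemma aux_inv_atBot : Filter.Tendsto (fun x : ℝ => x⁻¹) Filter.atBot (nhds 0) := by
  have h := (tendsto_inv_atTop_zero (𝕜 := ℝ)).comp tendsto_neg_atBot_atTop
  have h2 := h.neg
  convert h2 using 1
  · funext x; simp [Function.comp, inv_neg]
  · simp

lemma aux_limit :
    Filter.Tendsto (fun x : ℝ => x / Real.sqrt (1 + x^2)) Filter.atBot (nhds (-1)) := by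
  have h1 : Filter.Tendsto (fun x : ℝ => 1 + (x⁻¹)^2) Filter.atBot (nhds 1) := by
    have := (aux_inv_atBot.pow 2).const_add (1:ℝ)
    simpa using this
  have h2 : Filter.Tendsto (fun x : ℝ => Real.sqrt (1 + (x⁻¹)^2)) Filter.atBot (nhds 1) := by
    have := (Real.continuous_sqrt.tendsto 1).comp h1
    simpa [Function.comp_def] using this
  have h3 : Filter.Tendsto (fun x : ℝ => -(1 / Real.sqrt (1 + (x⁻¹)^2)))
      Filter.atBot (nhds (-1)) := by
    have := (tendsto_const_nhds (x := (1:ℝ)) (f := Filter.atBot)).div h2 one_ne_zero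
    simpa using this.neg
  apply h3.congr'
  filter_upwards [Filter.eventually_lt_atBot (0:ℝ)] with x hx
  have hx2 : (0:ℝ) < 1 + x^2 := by positivity
  have hs : 0 < Real.sqrt (1 + x^2) := Real.sqrt_pos.mpr hx2
  have hxne : x ≠ 0 := ne_of_lt hx
  have e : 1 + (x⁻¹)^2 = (1 + x^2) / x^2 := by field_simp; ring
  rw [e, Real.sqrt_div hx2.le, Real.sqrt_sq_eq_abs, abs_of_neg hx]
  rw [div_div_eq_mul_div]
  ring

/-- for `f = h·χ_{B(0,R)}` realized as a limit of smooth radial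
approximants `uₙ ∈ S` (with `R₁ₙ, R₂ₙ → R`), the total variation
`∫_Ω |∇f| = lim 2π∫₀^{2R} r|uₙ'| dr` equals `2πRh` (perimeter times jump height, scaling
linearly in `h`), whereas the Weingarten regularizer
`∫_Ω |W_f| = lim 2π∫₀^{2R} r|W_{uₙ}| dr` equals `4πR`, independent of `h`. -/
theorem tv_versus_weingarten
    (R h : ℝ) (hR : 0 < R) (hh : 0 < h)
    (φ : ℕ → ℝ → ℝ) (R₁ R₂ : ℕ → ℝ)
    (hclass : ∀ n, ContDiffOn ℝ 2 (φ n) (Set.Icc 0 (2*R)) ∧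
      0 < R₁ n ∧ R₁ n < R ∧ R < R₂ n ∧ R₂ n < 2*R ∧
      (∀ r ∈ Set.Icc 0 (R₁ n), φ n r = h) ∧
      (∀ r ∈ Set.Icc (R₂ n) (2*R), φ n r = 0) ∧
      (∀ r ∈ Set.Ioo 0 R, deriv (deriv (φ n)) r ≤ 0) ∧
      (∀ r ∈ Set.Ioo R (2*R), 0 ≤ deriv (deriv (φ n)) r) ∧
      deriv (φ n) R < -(2*h/R))
    (hpt : ∀ r ∈ Set.Icc (0:ℝ) (2*R),
      Tendsto (fun n => φ n r) atTop (nhds (if r < R then h else 0)))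
    (hR₁lim : Tendsto R₁ atTop (nhds R))
    (hR₂lim : Tendsto R₂ atTop (nhds R))
    (hder : Tendsto (fun n => deriv (φ n) R) atTop atBot)
    (hint1 : Tendsto (fun n => ∫ r in (0:ℝ)..R,
        deriv (φ n) r / Real.sqrt (1 + (deriv (φ n) r)^2)) atTop (nhds 0))
    (hint2 : Tendsto (fun n => ∫ r in R..(2*R),
        deriv (φ n) r / Real.sqrt (1 + (deriv (φ n) r)^2)) atTop (nhds 0)) :
    Tendsto (fun n => 2 * Real.pi * ∫ r in (0:ℝ)..(2*R), r * |deriv (φ n) r|)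
        atTop (nhds (2 * Real.pi * R * h)) ∧
    Tendsto (fun n => 2 * Real.pi * ∫ r in (0:ℝ)..(2*R),
        r * Real.sqrt ((deriv (deriv (φ n)) r / (1 + (deriv (φ n) r)^2) ^ ((3:ℝ)/2))^2
          + (deriv (φ n) r / (r * Real.sqrt (1 + (deriv (φ n) r)^2)))^2))
        atTop (nhds (4 * Real.pi * R)) := by
  have hkey := fun n => key R h hR hh (φ n) (hclass n).1 (hclass n).2.1 (hclass n).2.2.1
    (hclass n).2.2.2.1 (hclass n).2.2.2.2.1 (hclass n).2.2.2.2.2.1 (hclass n).2.2.2.2.2.2.1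
    (hclass n).2.2.2.2.2.2.2.1 (hclass n).2.2.2.2.2.2.2.2.1
  constructor
  · have hlow : Filter.Tendsto (fun n => R₁ n * h) Filter.atTop (nhds (R*h)) :=
      hR₁lim.mul_const h
    have hup : Filter.Tendsto (fun n => R₁ n * h + h * (R₂ n - R₁ n))
        Filter.atTop (nhds (R*h)) := by
      have h1 := (hR₁lim.mul_const h).add ((hR₂lim.sub hR₁lim).const_mul h)
      simpa using h1
    have hTV : Filter.Tendsto (fun n => ∫ r in (0:ℝ)..(2*R), r * |deriv (φ n) r|)
        Filter.atTop (nhds (R*h)) :=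
      tendsto_of_tendsto_of_tendsto_of_le_of_le hlow hup
        (fun n => (hkey n).1) (fun n => (hkey n).2.1)
    have h2 := hTV.const_mul (2*Real.pi)
    rw [show (2*Real.pi*R*h) = 2*Real.pi*(R*h) by ring]
    exact h2
  · have hgR : Filter.Tendsto
        (fun n => deriv (φ n) R / Real.sqrt (1 + (deriv (φ n) R)^2))
        Filter.atTop (nhds (-1)) := aux_limit.comp hder
    have hlow : Filter.Tendsto (fun n =>
        -(2*R*(deriv (φ n) R / Real.sqrt (1 + (deriv (φ n) R)^2)))
        + (∫ r in (0:ℝ)..R, deriv (φ n) r / Real.sqrt (1 + (deriv (φ n) r)^2))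
        - (∫ r in R..(2*R), deriv (φ n) r / Real.sqrt (1 + (deriv (φ n) r)^2)))
        Filter.atTop (nhds (2*R)) := by
      have h1 := ((hgR.const_mul (2*R)).neg.add hint1).sub hint2
      have e : -(2*R*(-1:ℝ)) + 0 - 0 = 2*R := by ring
      rwa [e] at h1
    have hup : Filter.Tendsto (fun n =>
        -(2*R*(deriv (φ n) R / Real.sqrt (1 + (deriv (φ n) R)^2)))
        - 2 * (∫ r in R..(2*R), deriv (φ n) r / Real.sqrt (1 + (deriv (φ n) r)^2)))
        Filter.atTop (nhds (2*R)) := by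
      have h1 := (hgR.const_mul (2*R)).neg.sub (hint2.const_mul 2)
      have e : -(2*R*(-1:ℝ)) - 2*0 = 2*R := by ring
      rwa [e] at h1
    have hW : Filter.Tendsto (fun n => ∫ r in (0:ℝ)..(2*R),
        r * Real.sqrt ((deriv (deriv (φ n)) r / (1 + (deriv (φ n) r)^2) ^ ((3:ℝ)/2))^2
          + (deriv (φ n) r / (r * Real.sqrt (1 + (deriv (φ n) r)^2)))^2))
        Filter.atTop (nhds (2*R)) :=
      tendsto_of_tendsto_of_tendsto_of_le_of_le hlow hup
        (fun n => (hkey n).2.2.1) (fun n => (hkey n).2.2.2)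
    have h2 := hW.const_mul (2*Real.pi)
    rw [show (4*Real.pi*R) = 2*Real.pi*(2*R) by ring]
    exact h2
end
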